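/- Let H be a finite-dimensional Hopf algebra. The coinvariants of the Hopf module End(H*) (with actions (α·f)(β) = f(βα₂)S⁻¹(α₁) and (f·h)(β) = f(h ⇀ β)) are exactly the image of the left regular representation L: H* → End(H*), L_γ(β) = γβ. That is, f satisfies α·f = α(1)f for all α ∈ H* if and only if f = L_γ with γ = f(1). -/

import Mathlib

open TensorProduct

/-- Convolution product on `H* = Dual k H`. -/
noncomputable def conv {k H : Type*} [CommSemiring k] [Semiring H] [HopfAlgebra k H]
    (α β : Module.Dual k H) : Module.Dual k H :=
  (LinearMap.mul' k k) ∘ₗ (TensorProduct.map α β) ∘ₗ (Coalgebra.comul (R := k))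

section Aux

variable {k H : Type*} [Field k] [Ring H] [HopfAlgebra k H]

open Coalgebra

/-- A representation of `comul (a*b)` built from representations of `a` and `b`. -/
noncomputable def reprMul {a b : H} {ι κ : Type*} (ra : Coalgebra.Repr k a ι) (rb : Coalgebra.Repr k b κ) :
    Coalgebra.Repr k (a * b) (ι × κ) where
  index := ra.index ×ˢ rb.index
  left := fun I => ra.left I.1 * rb.left I.2
  right := fun I => ra.right I.1 * rb.right I.2
  eq := by
    rw [Finset.sum_product]
    show _ = Coalgebra.comul (R := k) (a * b)
    rw [Bialgebra.comul_mul, ← ra.eq, ← rb.eq, Finset.sum_mul_sum]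
    simp [Algebra.TensorProduct.tmul_mul_tmul]

lemma repr_counit_smul_left {a : H} {ι : Type*} (r : Coalgebra.Repr k a ι) :
    ∑ i ∈ r.index, counit (R := k) (r.right i) • r.left i = a := by
  have h := congrArg (TensorProduct.rid k H) (sum_tmul_counit_eq r)
  rw [map_sum] at h
  simp only [TensorProduct.rid_tmul, one_smul] at h
  exact h

lemma repr_counit_smul_right {a : H} {ι : Type*} (r : Coalgebra.Repr k a ι) :
    ∑ i ∈ r.index, counit (R := k) (r.left i) • r.right i = a := by
  have h := congrArg (TensorProduct.lid k H) (sum_counit_tmul_eq r)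
  rw [map_sum] at h
  simp only [TensorProduct.lid_tmul, one_smul] at h
  exact h

/-- Coassociativity at the level of representations, applied through a linear map. -/
lemma sum3_eq {V : Type*} [AddCommMonoid V] [Module k V]
    (T : H ⊗[k] (H ⊗[k] H) →ₗ[k] V) {a : H} {ι κ Λ : Type*} (r : Coalgebra.Repr k a ι)
    (r1 : ∀ i, Coalgebra.Repr k (r.left i) κ) (r2 : ∀ i, Coalgebra.Repr k (r.right i) Λ) :
    ∑ i ∈ r.index, ∑ j ∈ (r1 i).index,
        T ((r1 i).left j ⊗ₜ[k] ((r1 i).right j ⊗ₜ[k] r.right i)) =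
    ∑ i ∈ r.index, ∑ j ∈ (r2 i).index,
        T (r.left i ⊗ₜ[k] ((r2 i).left j ⊗ₜ[k] (r2 i).right j)) := by
  have h := Coalgebra.sum_tmul_tmul_eq r r1 r2
  have h2 := congrArg T h
  simpa [map_sum] using h2

/-- A trilinear map from a bilinear "outer" map and a linear "inner" combiner. -/
noncomputable def TT {W V : Type*} [AddCommMonoid W] [Module k W] [AddCommMonoid V] [Module k V]
    (B : H →ₗ[k] W →ₗ[k] V) (c : H ⊗[k] H →ₗ[k] W) : H ⊗[k] (H ⊗[k] H) →ₗ[k] V :=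
  TensorProduct.lift B ∘ₗ c.lTensor H

@[simp] lemma TT_tmul {W V : Type*} [AddCommMonoid W] [Module k W] [AddCommMonoid V] [Module k V]
    (B : H →ₗ[k] W →ₗ[k] V) (c : H ⊗[k] H →ₗ[k] W) (x : H) (w : H ⊗[k] H) :
    TT B c (x ⊗ₜ[k] w) = B x (c w) := by
  simp [TT]

lemma conv_apply_repr (u v : Module.Dual k H) {z : H} {ι : Type*} (r : Coalgebra.Repr k z ι) :
    conv u v z = ∑ i ∈ r.index, u (r.left i) * v (r.right i) := by
  show (LinearMap.mul' k k) ((TensorProduct.map u v) (Coalgebra.comul (R := k) z)) = _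
  rw [show Coalgebra.comul (R := k) z = CoalgebraStruct.comul z from rfl, ← r.eq]
  simp [map_sum]

lemma conv_smul_left (c : k) (u v : Module.Dual k H) : conv (c • u) v = c • conv u v := by
  ext z
  rw [LinearMap.smul_apply, conv_apply_repr u v (ℛ k z), conv_apply_repr _ v (ℛ k z),
    Finset.smul_sum]
  exact Finset.sum_congr rfl fun i _ => by simp; ring

lemma conv_smul_right (c : k) (u v : Module.Dual k H) : conv u (c • v) = c • conv u v := by
  ext z
  rw [LinearMap.smul_apply, conv_apply_repr u v (ℛ k z), conv_apply_repr u _ (ℛ k z),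
    Finset.smul_sum]
  exact Finset.sum_congr rfl fun i _ => by simp; ring

lemma conv_sum_left {ι : Type*} (s : Finset ι) (u : ι → Module.Dual k H) (v : Module.Dual k H) :
    conv (∑ i ∈ s, u i) v = ∑ i ∈ s, conv (u i) v := by
  ext z
  rw [conv_apply_repr _ v (ℛ k z), LinearMap.sum_apply]
  simp only [LinearMap.sum_apply, Finset.sum_mul]
  rw [Finset.sum_comm]
  exact Finset.sum_congr rfl fun i _ => (conv_apply_repr (u i) v (ℛ k z)).symm

lemma conv_sum_right {ι : Type*} (s : Finset ι) (u : Module.Dual k H) (v : ι → Module.Dual k H) :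
    conv u (∑ i ∈ s, v i) = ∑ i ∈ s, conv u (v i) := by
  ext z
  rw [conv_apply_repr u _ (ℛ k z), LinearMap.sum_apply]
  simp only [LinearMap.sum_apply, Finset.mul_sum]
  rw [Finset.sum_comm]
  exact Finset.sum_congr rfl fun i _ => (conv_apply_repr u (v i) (ℛ k z)).symm

lemma conv_counit_left (v : Module.Dual k H) : conv (Coalgebra.counit (R := k)) v = v := by
  ext z
  rw [conv_apply_repr _ v (ℛ k z)]
  have h := congrArg (TensorProduct.lid k k) (sum_counit_tmul_map_eq (R := k) v z (repr := ℛ k z))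
  rw [map_sum] at h
  simpa [smul_eq_mul] using h

lemma conv_counit_right (v : Module.Dual k H) : conv v (Coalgebra.counit (R := k)) = v := by
  ext z
  rw [conv_apply_repr v _ (ℛ k z)]
  have h := congrArg (TensorProduct.rid k k) (sum_map_tmul_counit_eq (R := k) v z (repr := ℛ k z))
  rw [map_sum] at h
  simpa [smul_eq_mul, mul_comm] using h

lemma conv_assoc (u v w : Module.Dual k H) : conv (conv u v) w = conv u (conv v w) := by
  ext z
  let r := ℛ k z
  let r1 : ∀ i, Coalgebra.Repr k (r.left i) (H × H) := fun i => ℛ k (r.left i)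
  let r2 : ∀ i, Coalgebra.Repr k (r.right i) (H × H) := fun i => ℛ k (r.right i)
  have key := sum3_eq (TT ((LinearMap.mul k k) ∘ₗ u) ((LinearMap.mul' k k) ∘ₗ map v w)) r r1 r2
  simp only [TT_tmul, LinearMap.coe_comp, Function.comp_apply, map_tmul,
    LinearMap.mul'_apply, LinearMap.mul_apply'] at key
  rw [conv_apply_repr _ w r, conv_apply_repr u _ r]
  calc ∑ i ∈ r.index, (conv u v) (r.left i) * w (r.right i)
      = ∑ i ∈ r.index, ∑ j ∈ (r1 i).index,
          u ((r1 i).left j) * (v ((r1 i).right j) * w (r.right i)) := by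
        refine Finset.sum_congr rfl fun i _ => ?_
        rw [conv_apply_repr u v (r1 i), Finset.sum_mul]
        exact Finset.sum_congr rfl fun j _ => mul_assoc _ _ _
    _ = ∑ i ∈ r.index, ∑ j ∈ (r2 i).index,
          u (r.left i) * (v ((r2 i).left j) * w ((r2 i).right j)) := key
    _ = ∑ i ∈ r.index, u (r.left i) * (conv v w) (r.right i) := by
        refine Finset.sum_congr rfl fun i _ => ?_
        rw [conv_apply_repr v w (r2 i), Finset.mul_sum]

end Aux

section Antipode
variable {k H : Type*} [Field k] [Ring H] [HopfAlgebra k H]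
open Coalgebra

lemma antipode_one' : HopfAlgebra.antipode (R := k) (1 : H) = 1 := by
  have h := HopfAlgebra.mul_antipode_rTensor_comul_apply (R := k) (A := H) (a := 1)
  simpa [Algebra.TensorProduct.one_def] using h

lemma antipode_mul' (a b : H) :
    HopfAlgebra.antipode (R := k) (a * b)
      = HopfAlgebra.antipode (R := k) b * HopfAlgebra.antipode (R := k) a := by
  set S : H →ₗ[k] H := HopfAlgebra.antipode (R := k) with hSdef
  let ra := ℛ k a
  let rb := ℛ k b
  let ra1 : ∀ i, Coalgebra.Repr k (ra.left i) (H × H) := fun i => ℛ k (ra.left i)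
  let ra2 : ∀ i, Coalgebra.Repr k (ra.right i) (H × H) := fun i => ℛ k (ra.right i)
  let rb1 : ∀ j, Coalgebra.Repr k (rb.left j) (H × H) := fun j => ℛ k (rb.left j)
  let rb2 : ∀ j, Coalgebra.Repr k (rb.right j) (H × H) := fun j => ℛ k (rb.right j)
  let F : ∀ (i : ra.ι) (j : rb.ι), (ra2 i).ι → (rb2 j).ι → H := fun i j p q =>
    S (ra.left i * rb.left j) *
      (((ra2 i).left p * (rb2 j).left q) * (S ((rb2 j).right q) * S ((ra2 i).right p)))
  let G : ∀ (i : ra.ι) (j : rb.ι), (ra1 i).ι → (rb2 j).ι → H := fun i j p q =>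
    S ((ra1 i).left p * rb.left j) *
      (((ra1 i).right p * (rb2 j).left q) * (S ((rb2 j).right q) * S (ra.right i)))
  let Gn : ∀ (i : ra.ι) (j : rb.ι), (ra1 i).ι → (rb1 j).ι → H := fun i j p q =>
    S ((ra1 i).left p * (rb1 j).left q) *
      (((ra1 i).right p * (rb1 j).right q) * (S (rb.right j) * S (ra.right i)))
  set E : H := ∑ i ∈ ra.index, ∑ j ∈ rb.index, ∑ p ∈ (ra2 i).index, ∑ q ∈ (rb2 j).index,
      F i j p q with hE
  -- Claim A : E = S (a * b)
  have hA : E = S (a * b) := by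
    have step : ∀ i ∈ ra.index, ∀ j ∈ rb.index,
        (∑ p ∈ (ra2 i).index, ∑ q ∈ (rb2 j).index,
          ((ra2 i).left p * (rb2 j).left q) *
            (S ((rb2 j).right q) * S ((ra2 i).right p)))
        = (counit (R := k) (ra.right i) * counit (R := k) (rb.right j)) • (1 : H) := by
      intro i _ j _
      have hb := HopfAlgebra.sum_mul_antipode_eq_smul (rb2 j)
      have ha := HopfAlgebra.sum_mul_antipode_eq_smul (ra2 i)
      calc ∑ p ∈ (ra2 i).index, ∑ q ∈ (rb2 j).index,
              ((ra2 i).left p * (rb2 j).left q) *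
                (S ((rb2 j).right q) * S ((ra2 i).right p))
          = ∑ p ∈ (ra2 i).index, (ra2 i).left p *
              ((∑ q ∈ (rb2 j).index, (rb2 j).left q * S ((rb2 j).right q)) *
                S ((ra2 i).right p)) := by
            refine Finset.sum_congr rfl fun p _ => ?_
            rw [Finset.sum_mul, Finset.mul_sum]
            exact Finset.sum_congr rfl fun q _ => by simp [mul_assoc]
        _ = ∑ p ∈ (ra2 i).index, counit (R := k) (rb.right j) •
              ((ra2 i).left p * S ((ra2 i).right p)) := by
            refine Finset.sum_congr rfl fun p _ => ?_
            rw [hb, smul_mul_assoc, one_mul, mul_smul_comm]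
        _ = counit (R := k) (rb.right j) • (counit (R := k) (ra.right i) • (1 : H)) := by
            rw [← Finset.smul_sum, ha]
        _ = (counit (R := k) (ra.right i) * counit (R := k) (rb.right j)) • (1 : H) := by
            rw [smul_smul, mul_comm]
    calc E = ∑ i ∈ ra.index, ∑ j ∈ rb.index, S (ra.left i * rb.left j) *
          ((counit (R := k) (ra.right i) * counit (R := k) (rb.right j)) • (1 : H)) := by
          rw [hE]
          refine Finset.sum_congr rfl fun i hi => Finset.sum_congr rfl fun j hj => ?_
          rw [← step i hi j hj, Finset.mul_sum]
          exact Finset.sum_congr rfl fun p _ => by rw [Finset.mul_sum]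
      _ = ∑ i ∈ ra.index, ∑ j ∈ rb.index,
            S ((counit (R := k) (ra.right i) • ra.left i) *
               (counit (R := k) (rb.right j) • rb.left j)) := by
          refine Finset.sum_congr rfl fun i _ => Finset.sum_congr rfl fun j _ => ?_
          rw [smul_mul_smul_comm, map_smul]
          simp [mul_smul_comm]
      _ = S ((∑ i ∈ ra.index, counit (R := k) (ra.right i) • ra.left i) *
             (∑ j ∈ rb.index, counit (R := k) (rb.right j) • rb.left j)) := by
          rw [Finset.sum_mul_sum, map_sum]
          exact Finset.sum_congr rfl fun i _ => (map_sum S _ _).symm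
      _ = S (a * b) := by rw [repr_counit_smul_left ra, repr_counit_smul_left rb]
  -- Claim B : E = S b * S a
  have hB : E = S b * S a := by
    have hre1 : E = ∑ j ∈ rb.index, ∑ q ∈ (rb2 j).index, ∑ i ∈ ra.index,
        ∑ p ∈ (ra2 i).index, F i j p q := by
      rw [hE, Finset.sum_comm]
      refine Finset.sum_congr rfl fun j _ => ?_
      calc ∑ i ∈ ra.index, ∑ p ∈ (ra2 i).index, ∑ q ∈ (rb2 j).index, F i j p q
          = ∑ i ∈ ra.index, ∑ q ∈ (rb2 j).index, ∑ p ∈ (ra2 i).index, F i j p q :=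
            Finset.sum_congr rfl fun i _ => Finset.sum_comm
        _ = ∑ q ∈ (rb2 j).index, ∑ i ∈ ra.index, ∑ p ∈ (ra2 i).index, F i j p q :=
            Finset.sum_comm
    have conv1 : ∀ j, ∀ q, (∑ i ∈ ra.index, ∑ p ∈ (ra2 i).index, F i j p q)
        = ∑ i ∈ ra.index, ∑ p ∈ (ra1 i).index, G i j p q := by
      intro j q
      have key := sum3_eq (TT ((LinearMap.mul k H) ∘ₗ (S ∘ₗ LinearMap.mulRight k (rb.left j)))
          ((LinearMap.mul' k H) ∘ₗ map (LinearMap.mulRight k ((rb2 j).left q))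
            ((LinearMap.mul k H (S ((rb2 j).right q))) ∘ₗ S))) ra ra1 ra2
      simp only [TT_tmul, LinearMap.coe_comp, Function.comp_apply, map_tmul,
        LinearMap.mul'_apply, LinearMap.mul_apply', LinearMap.mulRight_apply,
        LinearMap.mulLeft_apply] at key
      exact key.symm
    have hre2 : E = ∑ i ∈ ra.index, ∑ p ∈ (ra1 i).index, ∑ j ∈ rb.index,
        ∑ q ∈ (rb2 j).index, G i j p q := by
      rw [hre1]
      calc ∑ j ∈ rb.index, ∑ q ∈ (rb2 j).index, ∑ i ∈ ra.index,
            ∑ p ∈ (ra2 i).index, F i j p q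
          = ∑ j ∈ rb.index, ∑ q ∈ (rb2 j).index, ∑ i ∈ ra.index,
            ∑ p ∈ (ra1 i).index, G i j p q := by
            exact Finset.sum_congr rfl fun j _ => Finset.sum_congr rfl fun q _ => conv1 j q
        _ = ∑ j ∈ rb.index, ∑ i ∈ ra.index, ∑ q ∈ (rb2 j).index,
            ∑ p ∈ (ra1 i).index, G i j p q :=
            Finset.sum_congr rfl fun j _ => Finset.sum_comm
        _ = ∑ i ∈ ra.index, ∑ j ∈ rb.index, ∑ q ∈ (rb2 j).index,
            ∑ p ∈ (ra1 i).index, G i j p q := Finset.sum_comm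
        _ = ∑ i ∈ ra.index, ∑ j ∈ rb.index, ∑ p ∈ (ra1 i).index,
            ∑ q ∈ (rb2 j).index, G i j p q :=
            Finset.sum_congr rfl fun i _ => Finset.sum_congr rfl fun j _ => Finset.sum_comm
        _ = ∑ i ∈ ra.index, ∑ p ∈ (ra1 i).index, ∑ j ∈ rb.index,
            ∑ q ∈ (rb2 j).index, G i j p q :=
            Finset.sum_congr rfl fun i _ => Finset.sum_comm
    have conv2 : ∀ i, ∀ p, (∑ j ∈ rb.index, ∑ q ∈ (rb2 j).index, G i j p q)
        = ∑ j ∈ rb.index, ∑ q ∈ (rb1 j).index, Gn i j p q := by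
      intro i p
      have key := sum3_eq (TT ((LinearMap.mul k H) ∘ₗ (S ∘ₗ LinearMap.mulLeft k ((ra1 i).left p)))
          ((LinearMap.mul' k H) ∘ₗ map (LinearMap.mulLeft k ((ra1 i).right p))
            ((LinearMap.mulRight k (S (ra.right i))) ∘ₗ S))) rb rb1 rb2
      simp only [TT_tmul, LinearMap.coe_comp, Function.comp_apply, map_tmul,
        LinearMap.mul'_apply, LinearMap.mul_apply', LinearMap.mulRight_apply,
        LinearMap.mulLeft_apply] at key
      exact key.symm
    have hre3 : E = ∑ i ∈ ra.index, ∑ j ∈ rb.index, ∑ p ∈ (ra1 i).index,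
        ∑ q ∈ (rb1 j).index, Gn i j p q := by
      rw [hre2]
      refine Finset.sum_congr rfl fun i _ => ?_
      calc ∑ p ∈ (ra1 i).index, ∑ j ∈ rb.index, ∑ q ∈ (rb2 j).index, G i j p q
          = ∑ p ∈ (ra1 i).index, ∑ j ∈ rb.index, ∑ q ∈ (rb1 j).index, Gn i j p q :=
            Finset.sum_congr rfl fun p _ => conv2 i p
        _ = ∑ j ∈ rb.index, ∑ p ∈ (ra1 i).index, ∑ q ∈ (rb1 j).index, Gn i j p q :=
            Finset.sum_comm
    have contract : ∀ i ∈ ra.index, ∀ j ∈ rb.index,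
        (∑ p ∈ (ra1 i).index, ∑ q ∈ (rb1 j).index, Gn i j p q)
        = (counit (R := k) (ra.left i) * counit (R := k) (rb.left j)) •
            (S (rb.right j) * S (ra.right i)) := by
      intro i _ j _
      have hc := HopfAlgebra.sum_antipode_mul_eq_smul (reprMul (ra1 i) (rb1 j))
      simp only [reprMul] at hc
      rw [Finset.sum_product] at hc
      calc ∑ p ∈ (ra1 i).index, ∑ q ∈ (rb1 j).index, Gn i j p q
          = (∑ p ∈ (ra1 i).index, ∑ q ∈ (rb1 j).index,
              S ((ra1 i).left p * (rb1 j).left q) * ((ra1 i).right p * (rb1 j).right q)) *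
              (S (rb.right j) * S (ra.right i)) := by
            rw [Finset.sum_mul]
            refine Finset.sum_congr rfl fun p _ => ?_
            rw [Finset.sum_mul]
            exact Finset.sum_congr rfl fun q _ => (mul_assoc _ _ _).symm
        _ = (counit (R := k) (ra.left i * rb.left j) • (1 : H)) *
              (S (rb.right j) * S (ra.right i)) := by rw [hc]
        _ = (counit (R := k) (ra.left i) * counit (R := k) (rb.left j)) •
              (S (rb.right j) * S (ra.right i)) := by
            rw [Bialgebra.counit_mul, smul_mul_assoc, one_mul]
    calc E = ∑ i ∈ ra.index, ∑ j ∈ rb.index,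
          (counit (R := k) (rb.left j) • S (rb.right j)) *
          (counit (R := k) (ra.left i) • S (ra.right i)) := by
          rw [hre3]
          refine Finset.sum_congr rfl fun i hi => Finset.sum_congr rfl fun j hj => ?_
          rw [contract i hi j hj, smul_mul_smul_comm, mul_comm (counit (R := k) (rb.left j))]
      _ = (∑ j ∈ rb.index, counit (R := k) (rb.left j) • S (rb.right j)) *
          (∑ i ∈ ra.index, counit (R := k) (ra.left i) • S (ra.right i)) := by
          rw [Finset.sum_mul_sum, Finset.sum_comm]
      _ = S b * S a := by
          simp only [← map_smul]
          rw [← map_sum, ← map_sum, repr_counit_smul_right ra, repr_counit_smul_right rb]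
  rw [← hA, hB]

end Antipode

section SinvLemmas
variable {k H : Type*} [Field k] [Ring H] [HopfAlgebra k H]
open Coalgebra

variable {Sinv : H →ₗ[k] H}

lemma Sinv_one (hS1 : ∀ x, Sinv ((HopfAlgebra.antipode (R := k) : H →ₗ[k] H) x) = x) :
    Sinv 1 = 1 := by
  have h := hS1 1
  rwa [antipode_one'] at h

lemma Sinv_mul (hS1 : ∀ x, Sinv ((HopfAlgebra.antipode (R := k) : H →ₗ[k] H) x) = x)
    (hS2 : ∀ x, (HopfAlgebra.antipode (R := k) : H →ₗ[k] H) (Sinv x) = x) (x y : H) :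
    Sinv (x * y) = Sinv y * Sinv x := by
  conv_lhs => rw [← hS2 x, ← hS2 y, ← antipode_mul']
  rw [hS1]

lemma sum_Sinv_right_mul_left
    (hS1 : ∀ x, Sinv ((HopfAlgebra.antipode (R := k) : H →ₗ[k] H) x) = x)
    (hS2 : ∀ x, (HopfAlgebra.antipode (R := k) : H →ₗ[k] H) (Sinv x) = x)
    {z : H} {ι : Type*} (r : Coalgebra.Repr k z ι) :
    ∑ i ∈ r.index, Sinv (r.right i) * r.left i = counit (R := k) z • 1 := by
  have h := HopfAlgebra.sum_antipode_mul_eq_smul r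
  calc ∑ i ∈ r.index, Sinv (r.right i) * r.left i
      = ∑ i ∈ r.index, Sinv (HopfAlgebra.antipode (R := k) (r.left i) * r.right i) := by
        refine Finset.sum_congr rfl fun i _ => ?_
        rw [Sinv_mul hS1 hS2, hS1]
    _ = Sinv (∑ i ∈ r.index, HopfAlgebra.antipode (R := k) (r.left i) * r.right i) :=
        (map_sum Sinv _ _).symm
    _ = counit (R := k) z • 1 := by rw [h, map_smul, Sinv_one hS1]

lemma sum_right_mul_Sinv_left
    (hS1 : ∀ x, Sinv ((HopfAlgebra.antipode (R := k) : H →ₗ[k] H) x) = x)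
    (hS2 : ∀ x, (HopfAlgebra.antipode (R := k) : H →ₗ[k] H) (Sinv x) = x)
    {z : H} {ι : Type*} (r : Coalgebra.Repr k z ι) :
    ∑ i ∈ r.index, r.right i * Sinv (r.left i) = counit (R := k) z • 1 := by
  have h := HopfAlgebra.sum_mul_antipode_eq_smul r
  calc ∑ i ∈ r.index, r.right i * Sinv (r.left i)
      = ∑ i ∈ r.index, Sinv (r.left i * HopfAlgebra.antipode (R := k) (r.right i)) := by
        refine Finset.sum_congr rfl fun i _ => ?_
        rw [Sinv_mul hS1 hS2, hS1]
    _ = Sinv (∑ i ∈ r.index, r.left i * HopfAlgebra.antipode (R := k) (r.right i)) :=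
        (map_sum Sinv _ _).symm
    _ = counit (R := k) z • 1 := by rw [h, map_smul, Sinv_one hS1]

end SinvLemmas

section ConvMore
variable {k H : Type*} [Field k] [Ring H] [HopfAlgebra k H]
open Coalgebra

lemma conv_add_right (u v w : Module.Dual k H) : conv u (v + w) = conv u v + conv u w := by
  ext z
  rw [LinearMap.add_apply, conv_apply_repr u _ (ℛ k z), conv_apply_repr u v (ℛ k z),
    conv_apply_repr u w (ℛ k z), ← Finset.sum_add_distrib]
  exact Finset.sum_congr rfl fun i _ => by simp [mul_add]

/-- `conv u -` as a linear map. -/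
noncomputable def convR (u : Module.Dual k H) : Module.Dual k H →ₗ[k] Module.Dual k H where
  toFun := fun v => conv u v
  map_add' := fun v w => conv_add_right u v w
  map_smul' := fun c v => conv_smul_right c u v

@[simp] lemma convR_apply (u v : Module.Dual k H) : convR u v = conv u v := rfl

end ConvMore

section Main
variable {k H : Type*} [Field k] [Ring H] [HopfAlgebra k H]
open Coalgebra

lemma key_forward [FiniteDimensional k H] (Sinv : H →ₗ[k] H)
    (hS1 : ∀ x, Sinv ((HopfAlgebra.antipode (R := k) : H →ₗ[k] H) x) = x)
    (hS2 : ∀ x, (HopfAlgebra.antipode (R := k) : H →ₗ[k] H) (Sinv x) = x)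
    (f : Module.Dual k H →ₗ[k] Module.Dual k H)
    (hcoinv : ∀ (α : Module.Dual k H) (ι : Type) [Fintype ι]
        (αA αB : ι → Module.Dual k H),
        (∀ x y : H, α (x * y) = ∑ i, αA i x * αB i y) →
        ∀ β : Module.Dual k H,
          ∑ i, conv (f (conv β (αB i))) ((αA i) ∘ₗ Sinv) = α 1 • f β)
    (α β : Module.Dual k H) : conv (f β) α = f (conv β α) := by
  classical
  set bas : Module.Basis (Fin (Module.finrank k H)) k H := Module.finBasis k H with hbas
  let Φ : H →ₗ[k] Module.Dual k H :=
    f ∘ₗ (convR β) ∘ₗ ((LinearMap.llcomp k H H k α) ∘ₗ (LinearMap.mul k H))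
  have hΦ : ∀ h : H, Φ h = f (conv β (α ∘ₗ (LinearMap.mul k H h))) := fun h => rfl
  -- general decomposition validity
  have hval : ∀ (γ : Module.Dual k H) (x y : H),
      γ (x * y) = ∑ i, bas.coord i x * (γ ∘ₗ (LinearMap.mul k H (bas i))) y := by
    intro γ x y
    conv_lhs => rw [← Module.Basis.sum_repr bas x]
    rw [Finset.sum_mul, map_sum]
    refine Finset.sum_congr rfl fun i _ => ?_
    rw [smul_mul_assoc, map_smul]
    simp [Module.Basis.coord_apply, LinearMap.mul_apply', smul_eq_mul]
  -- the coinvariance hypothesis, instantiated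
  have hinst : ∀ i : Fin (Module.finrank k H),
      (∑ j, conv (f (conv β (α ∘ₗ (LinearMap.mul k H (bas i * bas j)))))
        (bas.coord j ∘ₗ Sinv)) = α (bas i) • f β := by
    intro i
    have hv : ∀ x y : H, (α ∘ₗ (LinearMap.mul k H (bas i))) (x * y)
        = ∑ j, bas.coord j x * (α ∘ₗ (LinearMap.mul k H (bas i * bas j))) y := by
      intro x y
      rw [hval (α ∘ₗ (LinearMap.mul k H (bas i))) x y]
      refine Finset.sum_congr rfl fun j _ => ?_
      congr 1
      simp [LinearMap.mul_apply', mul_assoc]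
    have h := hcoinv (α ∘ₗ (LinearMap.mul k H (bas i))) (Fin (Module.finrank k H)) bas.coord
        (fun j => α ∘ₗ (LinearMap.mul k H (bas i * bas j))) hv β
    simpa [LinearMap.mul_apply'] using h
  set X : Module.Dual k H :=
    ∑ i, conv (∑ j, conv (f (conv β (α ∘ₗ (LinearMap.mul k H (bas i * bas j)))))
      (bas.coord j ∘ₗ Sinv)) (bas.coord i) with hX
  have claim1 : X = conv (f β) α := by
    calc X = ∑ i, conv (α (bas i) • f β) (bas.coord i) := by
          rw [hX]
          exact Finset.sum_congr rfl fun i _ =>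
            congrArg (fun w => conv w (bas.coord i)) (hinst i)
      _ = ∑ i, conv (f β) (α (bas i) • bas.coord i) := by
          refine Finset.sum_congr rfl fun i _ => ?_
          rw [conv_smul_left, ← conv_smul_right]
      _ = conv (f β) (∑ i, α (bas i) • bas.coord i) := (conv_sum_right _ _ _).symm
      _ = conv (f β) α := by
          congr 1
          ext x
          rw [LinearMap.sum_apply]
          conv_rhs => rw [← Module.Basis.sum_repr bas x]
          rw [map_sum]
          refine Finset.sum_congr rfl fun i _ => ?_
          rw [map_smul, LinearMap.smul_apply]
          simp [Module.Basis.coord_apply, smul_eq_mul, mul_comm]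
  have claim2 : X = f (conv β α) := by
    ext z
    let r := ℛ k z
    let r1 : ∀ p, Coalgebra.Repr k (r.left p) (H × H) := fun p => ℛ k (r.left p)
    let r2 : ∀ p, Coalgebra.Repr k (r.right p) (H × H) := fun p => ℛ k (r.right p)
    have contract : ∀ (x y w : H),
        (∑ i, ∑ j, Φ (bas i * bas j) x * ((bas.coord j ∘ₗ Sinv) y * bas.coord i w))
          = Φ (w * Sinv y) x := by
      intro x y w
      have hw : w * Sinv y
          = ∑ i, ∑ j, (bas.coord i w * bas.coord j (Sinv y)) • (bas i * bas j) := by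
        conv_lhs => rw [← Module.Basis.sum_repr bas w, ← Module.Basis.sum_repr bas (Sinv y)]
        rw [Finset.sum_mul_sum]
        exact Finset.sum_congr rfl fun i _ => Finset.sum_congr rfl fun j _ => by
          rw [smul_mul_smul_comm]; simp [Module.Basis.coord_apply]
      rw [hw, map_sum, LinearMap.sum_apply]
      refine Finset.sum_congr rfl fun i _ => ?_
      rw [map_sum, LinearMap.sum_apply]
      refine Finset.sum_congr rfl fun j _ => ?_
      rw [map_smul, LinearMap.smul_apply, smul_eq_mul]
      simp only [LinearMap.comp_apply]
      ring
    have hmain : ∀ p ∈ r.index,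
        (∑ i, (∑ j, conv (f (conv β (α ∘ₗ (LinearMap.mul k H (bas i * bas j)))))
            (bas.coord j ∘ₗ Sinv)) (r.left p) * bas.coord i (r.right p))
        = ∑ q ∈ (r1 p).index, Φ (r.right p * Sinv ((r1 p).right q)) ((r1 p).left q) := by
      intro p _
      calc (∑ i, (∑ j, conv (f (conv β (α ∘ₗ (LinearMap.mul k H (bas i * bas j)))))
              (bas.coord j ∘ₗ Sinv)) (r.left p) * bas.coord i (r.right p))
          = ∑ i, ∑ j, ∑ q ∈ (r1 p).index, Φ (bas i * bas j) ((r1 p).left q) *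
              ((bas.coord j ∘ₗ Sinv) ((r1 p).right q) * bas.coord i (r.right p)) := by
            refine Finset.sum_congr rfl fun i _ => ?_
            rw [LinearMap.sum_apply, Finset.sum_mul]
            refine Finset.sum_congr rfl fun j _ => ?_
            rw [conv_apply_repr _ _ (r1 p), Finset.sum_mul]
            exact Finset.sum_congr rfl fun q _ => by
              rw [← hΦ (bas i * bas j), mul_assoc]
        _ = ∑ i, ∑ q ∈ (r1 p).index, ∑ j, Φ (bas i * bas j) ((r1 p).left q) *
              ((bas.coord j ∘ₗ Sinv) ((r1 p).right q) * bas.coord i (r.right p)) :=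
            Finset.sum_congr rfl fun i _ => Finset.sum_comm
        _ = ∑ q ∈ (r1 p).index, ∑ i, ∑ j, Φ (bas i * bas j) ((r1 p).left q) *
              ((bas.coord j ∘ₗ Sinv) ((r1 p).right q) * bas.coord i (r.right p)) :=
            Finset.sum_comm
        _ = ∑ q ∈ (r1 p).index, Φ (r.right p * Sinv ((r1 p).right q)) ((r1 p).left q) :=
            Finset.sum_congr rfl fun q _ =>
              contract ((r1 p).left q) ((r1 p).right q) (r.right p)
    calc X z
        = ∑ i, (conv (∑ j, conv (f (conv β (α ∘ₗ (LinearMap.mul k H (bas i * bas j)))))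
            (bas.coord j ∘ₗ Sinv)) (bas.coord i)) z := by
          rw [hX, LinearMap.sum_apply]
      _ = ∑ i, ∑ p ∈ r.index, (∑ j, conv (f (conv β (α ∘ₗ (LinearMap.mul k H (bas i * bas j)))))
            (bas.coord j ∘ₗ Sinv)) (r.left p) * bas.coord i (r.right p) :=
          Finset.sum_congr rfl fun i _ => conv_apply_repr _ _ r
      _ = ∑ p ∈ r.index, ∑ i, (∑ j, conv (f (conv β (α ∘ₗ (LinearMap.mul k H (bas i * bas j)))))
            (bas.coord j ∘ₗ Sinv)) (r.left p) * bas.coord i (r.right p) := Finset.sum_comm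
      _ = ∑ p ∈ r.index, ∑ q ∈ (r1 p).index,
            Φ (r.right p * Sinv ((r1 p).right q)) ((r1 p).left q) :=
          Finset.sum_congr rfl fun p hp => hmain p hp
      _ = ∑ p ∈ r.index, ∑ q ∈ (r2 p).index,
            Φ ((r2 p).right q * Sinv ((r2 p).left q)) (r.left p) := by
          have key := sum3_eq (TT (Φ.flip)
            ((LinearMap.mul' k H) ∘ₗ (map LinearMap.id Sinv)
              ∘ₗ (TensorProduct.comm k H H).toLinearMap)) r r1 r2
          simp only [TT_tmul, LinearMap.coe_comp, Function.comp_apply,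
            LinearEquiv.coe_coe, TensorProduct.comm_tmul, map_tmul, LinearMap.id_coe, id_eq,
            LinearMap.mul'_apply, LinearMap.flip_apply] at key
          exact key
      _ = ∑ p ∈ r.index, counit (R := k) (r.right p) • (Φ 1 (r.left p)) := by
          refine Finset.sum_congr rfl fun p _ => ?_
          calc ∑ q ∈ (r2 p).index, Φ ((r2 p).right q * Sinv ((r2 p).left q)) (r.left p)
              = Φ (∑ q ∈ (r2 p).index, (r2 p).right q * Sinv ((r2 p).left q)) (r.left p) := by
                rw [map_sum, LinearMap.sum_apply]
            _ = counit (R := k) (r.right p) • (Φ 1 (r.left p)) := by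
                rw [sum_right_mul_Sinv_left hS1 hS2 (r2 p), map_smul, LinearMap.smul_apply]
      _ = (Φ 1) (∑ p ∈ r.index, counit (R := k) (r.right p) • r.left p) := by
          rw [map_sum]
          exact Finset.sum_congr rfl fun p _ => (map_smul (Φ 1) _ _).symm
      _ = Φ 1 z := congrArg (Φ 1) (repr_counit_smul_left r)
      _ = f (conv β α) z := by
          have h1 : (LinearMap.mul k H) (1 : H) = LinearMap.id :=
            LinearMap.ext fun x => by simp [LinearMap.mul_apply']
          rw [hΦ 1, h1, LinearMap.comp_id]
  rw [← claim1, claim2]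

end Main

open scoped Coalgebra

/-- Coinvariants of the Hopf module `End(H*)` with action `(α·f)(β) = f(β α₂) S⁻¹(α₁)`
are exactly the left multiplications `L_γ`, `γ = f(1) = f(ε)`. -/
theorem stmt5 {k H : Type*} [Field k] [Ring H] [HopfAlgebra k H] [FiniteDimensional k H]
    (Sinv : H →ₗ[k] H)
    (hS1 : ∀ x, Sinv ((HopfAlgebra.antipode (R := k) : H →ₗ[k] H) x) = x)
    (hS2 : ∀ x, (HopfAlgebra.antipode (R := k) : H →ₗ[k] H) (Sinv x) = x)
    (f : Module.Dual k H →ₗ[k] Module.Dual k H) :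
    (∀ (α : Module.Dual k H) (ι : Type) [Fintype ι] (αA αB : ι → Module.Dual k H),
        (∀ x y : H, α (x * y) = ∑ i, αA i x * αB i y) →
        ∀ β : Module.Dual k H,
          ∑ i, conv (f (conv β (αB i))) ((αA i) ∘ₗ Sinv) = α 1 • f β)
      ↔ (∀ β : Module.Dual k H, f β = conv (f (Coalgebra.counit (R := k))) β) := by
  constructor
  · intro hcoinv β
    have key := key_forward Sinv hS1 hS2 f hcoinv β (Coalgebra.counit (R := k))
    rw [conv_counit_left β] at key
    exact key.symm
  · intro hf α ι _ αA αB hαd β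
    have hstep : (∑ i, conv (αB i) (αA i ∘ₗ Sinv)) = α 1 • Coalgebra.counit (R := k) := by
      ext z
      rw [LinearMap.sum_apply, LinearMap.smul_apply]
      calc ∑ i, (conv (αB i) (αA i ∘ₗ Sinv)) z
          = ∑ i, ∑ p ∈ (ℛ k z).index,
              αB i ((ℛ k z).left p) * (αA i ∘ₗ Sinv) ((ℛ k z).right p) :=
            Finset.sum_congr rfl fun i _ => conv_apply_repr _ _ (ℛ k z)
        _ = ∑ p ∈ (ℛ k z).index, ∑ i,
              αA i (Sinv ((ℛ k z).right p)) * αB i ((ℛ k z).left p) := by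
            rw [Finset.sum_comm]
            exact Finset.sum_congr rfl fun p _ => Finset.sum_congr rfl fun i _ => by
              simp only [LinearMap.comp_apply]; ring
        _ = ∑ p ∈ (ℛ k z).index, α (Sinv ((ℛ k z).right p) * (ℛ k z).left p) :=
            Finset.sum_congr rfl fun p _ => (hαd _ _).symm
        _ = α (∑ p ∈ (ℛ k z).index, Sinv ((ℛ k z).right p) * (ℛ k z).left p) :=
            (map_sum α _ _).symm
        _ = α 1 * Coalgebra.counit (R := k) z := by
            rw [sum_Sinv_right_mul_left hS1 hS2 (ℛ k z), map_smul, smul_eq_mul, mul_comm]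
    calc ∑ i, conv (f (conv β (αB i))) (αA i ∘ₗ Sinv)
        = ∑ i, conv (conv (f (Coalgebra.counit (R := k))) (conv β (αB i))) (αA i ∘ₗ Sinv) :=
          Finset.sum_congr rfl fun i _ => by rw [← hf]
      _ = ∑ i, conv (f (Coalgebra.counit (R := k))) (conv β (conv (αB i) (αA i ∘ₗ Sinv))) :=
          Finset.sum_congr rfl fun i _ => by rw [conv_assoc, conv_assoc]
      _ = conv (f (Coalgebra.counit (R := k))) (conv β (∑ i, conv (αB i) (αA i ∘ₗ Sinv))) := by
          rw [conv_sum_right, conv_sum_right]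
      _ = α 1 • f β := by
          rw [hstep, conv_smul_right, conv_smul_right, conv_counit_right, ← hf]
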